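/- arXiv:2205.13035 — 2 statements merged into one kernel-verified Lean document; each statement's English description precedes it below -/
import Mathlib

section
/- Fix 0 < H_− ≤ H_+ < 1. There exists a constant C, independent of H ∈ [H_−, H_+] and of k ≥ 2, such that for all λ with 0 < |λ| ≤ π, |f_{H,k}(λ) − f_{H,∞}(λ)| ≤ C |λ|^{min(2, 3−2H)} / k^{min(1, 2H)}, where f_{H,k} and f_{H,∞} are the spectral densities of the pre-averaged fBm increment sequences. In particular, f_{H,k} → f_{H,∞} uniformly in H ∈ [H_−, H_+] and λ ≠ 0 as k → ∞. -/
open Real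

-- antitone base for negative exponent
private lemma rpow_neg_anti {a b c : ℝ} (ha : 0 < a) (hab : a ≤ b) (hc : 0 ≤ c) :
    b ^ (-c) ≤ a ^ (-c) := by
  rw [Real.rpow_neg (ha.le.trans hab), Real.rpow_neg ha.le]
  exact inv_anti₀ (Real.rpow_pos_of_pos ha c) (Real.rpow_le_rpow ha.le hab hc)

-- key convexity step
private lemma step_ineq {s x : ℝ} (hs : 0 < s) (hx : 1 ≤ x) :
    s * (x + 1) ^ (-(1 + s)) ≤ x ^ (-s) - (x + 1) ^ (-s) := by
  have hx0 : (0:ℝ) < x := lt_of_lt_of_le one_pos hx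
  have hx1 : (0:ℝ) < x + 1 := by linarith
  have h1 : x / (x + 1) ≤ Real.exp (-(1 / (x + 1))) := by
    have h := Real.add_one_le_exp (-(1 / (x + 1)))
    have : x / (x+1) = -(1/(x+1)) + 1 := by field_simp; ring
    linarith [this ▸ le_refl (x / (x+1)), h]
  have h2 : (x / (x + 1)) ^ s ≤ Real.exp (-(1 / (x + 1))) ^ s :=
    Real.rpow_le_rpow (by positivity) h1 hs.le
  have h3 : Real.exp (-(1 / (x + 1))) ^ s = Real.exp (-(s / (x + 1))) := by
    rw [← Real.exp_mul]; ring_nf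
  have h4 : Real.exp (-(s / (x + 1))) * (1 + s / (x + 1)) ≤ 1 := by
    have := Real.add_one_le_exp (s / (x + 1))
    have he : Real.exp (-(s / (x + 1))) = (Real.exp (s / (x + 1)))⁻¹ := Real.exp_neg _
    rw [he]
    have hp := Real.exp_pos (s / (x + 1))
    rw [inv_mul_le_iff₀ hp]
    linarith
  have key : (x / (x + 1)) ^ s * (1 + s / (x + 1)) ≤ 1 := by
    calc (x / (x + 1)) ^ s * (1 + s / (x + 1))
        ≤ Real.exp (-(s / (x + 1))) * (1 + s / (x + 1)) := by
          apply mul_le_mul_of_nonneg_right (h3 ▸ h2); positivity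
      _ ≤ 1 := h4
  have hA : (x + 1) ^ (-s) = x ^ (-s) * (x / (x + 1)) ^ s := by
    rw [Real.div_rpow hx0.le hx1.le, Real.rpow_neg hx0.le, Real.rpow_neg hx1.le]
    field_simp
  have hB : (x + 1) ^ (-(1 + s)) = (x + 1) ^ (-s) / (x + 1) := by
    rw [show -(1+s) = -s + (-1) by ring, Real.rpow_add hx1, Real.rpow_neg_one]
    field_simp
  have px : (0:ℝ) < x ^ (-s) := Real.rpow_pos_of_pos hx0 _
  have key2 : x ^ (-s) * ((x / (x + 1)) ^ s * (1 + s / (x + 1))) ≤ x ^ (-s) * 1 :=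
    mul_le_mul_of_nonneg_left key px.le
  have hexp : x ^ (-s) * ((x / (x + 1)) ^ s * (1 + s / (x + 1)))
      = (x + 1) ^ (-s) + s * (x + 1) ^ (-(1 + s)) := by
    rw [hB, hA]; field_simp
  linarith [hexp ▸ key2]


private lemma summable_t {s : ℝ} (hs : 0 < s) (M : ℕ) :
    Summable (fun n : ℕ => if M ≤ n then (n:ℝ) ^ (-(1+s)) else 0) := by
  have hg : Summable (fun n : ℕ => (n:ℝ) ^ (-(1+s))) := Real.summable_nat_rpow.mpr (by linarith)
  exact Summable.of_nonneg_of_le (fun n => by positivity)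
    (fun n => by split <;> [exact le_rfl; positivity]) hg

private lemma tsum_tail_le {s : ℝ} (hs : 0 < s) {M : ℕ} (hM : 1 ≤ M) :
    ∑' n : ℕ, (if M ≤ n then (n:ℝ) ^ (-(1+s)) else 0) ≤ (1 + 1/s) * (M:ℝ) ^ (-s) := by
  set t : ℕ → ℝ := fun n => if M ≤ n then (n:ℝ) ^ (-(1+s)) else 0 with ht
  have hM1 : (1:ℝ) ≤ (M:ℝ) := by exact_mod_cast hM
  have hMpos : (0:ℝ) < (M:ℝ) := by linarith
  have hQ : ∀ N : ℕ, ∑ n ∈ Finset.range (M + 1 + N), t n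
      ≤ (M:ℝ) ^ (-s) + (1/s) * ((M:ℝ) ^ (-s) - ((M + N : ℕ) : ℝ) ^ (-s)) := by
    intro N
    induction N with
    | zero =>
      have hz : ∑ n ∈ Finset.range M, t n = 0 := by
        apply Finset.sum_eq_zero
        intro n hn
        rw [Finset.mem_range] at hn
        simp only [ht]
        rw [if_neg (by omega)]
      rw [show M + 1 + 0 = M + 1 by ring, Finset.sum_range_succ, hz, zero_add]
      have : t M = (M:ℝ) ^ (-(1+s)) := by simp [ht]
      rw [this]
      have : (M:ℝ) ^ (-(1+s)) ≤ (M:ℝ) ^ (-s) :=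
        Real.rpow_le_rpow_of_exponent_le hM1 (by linarith)
      simp only [Nat.add_zero]
      linarith
    | succ N ih =>
      rw [show M + 1 + (N+1) = (M + 1 + N) + 1 by ring, Finset.sum_range_succ]
      have hcond : t (M + 1 + N) = ((M + 1 + N : ℕ):ℝ) ^ (-(1+s)) := by
        simp only [ht]; rw [if_pos (by omega)]
      have hx : (1:ℝ) ≤ ((M + N : ℕ):ℝ) := by
        have : (1:ℕ) ≤ M + N := by omega
        exact_mod_cast this
      have hstep := step_ineq hs hx
      have hcast : ((M + 1 + N : ℕ):ℝ) = ((M + N : ℕ):ℝ) + 1 := by push_cast; ring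
      rw [hcond, hcast]
      have h2 : (((M + N:ℕ):ℝ) + 1) ^ (-(1+s))
          ≤ (1/s) * (((M+N:ℕ):ℝ) ^ (-s) - (((M+N:ℕ):ℝ) + 1) ^ (-s)) := by
        have hinv : (0:ℝ) < 1/s := by positivity
        have h3 := mul_le_mul_of_nonneg_left hstep hinv.le
        have h4 : (1/s) * (s * (((M+N:ℕ):ℝ) + 1) ^ (-(1+s))) = (((M+N:ℕ):ℝ) + 1) ^ (-(1+s)) := by
          field_simp
        linarith [h4 ▸ h3]
      have hcast2 : ((M + (N+1) : ℕ):ℝ) = ((M + N : ℕ):ℝ) + 1 := by push_cast; ring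
      rw [hcast2]
      linarith
  have hfin : ∀ N : ℕ, ∑ n ∈ Finset.range N, t n ≤ (1 + 1/s) * (M:ℝ) ^ (-s) := by
    intro N
    have hsub : ∑ n ∈ Finset.range N, t n ≤ ∑ n ∈ Finset.range (M + 1 + N), t n := by
      apply Finset.sum_le_sum_of_subset_of_nonneg
      · exact Finset.range_subset_range.mpr (by omega)
      · intro i _ _; simp only [ht]; positivity
    have hnn : (0:ℝ) ≤ ((M + N : ℕ):ℝ) ^ (-s) := by positivity
    have := hQ N
    have h1s : 0 ≤ 1/s := by positivity
    nlinarith [this, hsub]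
  exact Real.tsum_le_of_sum_range_le (fun n => by by_cases h : M ≤ n <;> simp [ht, h] <;> positivity) hfin

-- L1: uniform lower bound for sin² at the lattice points
private lemma sin_sq_ge {k : ℕ} (hk : 1 ≤ k) {l : ℝ} (hl : 0 < |l|) (hl2 : |l| ≤ π) (j : ℤ) :
    l ^ 2 / (π ^ 2 * (k:ℝ) ^ 2) ≤ Real.sin (l / (2 * k) + π * j / k) ^ 2 := by
  have hkR : (0:ℝ) < (k:ℝ) := by exact_mod_cast hk
  set θ : ℝ := l / (2 * k) + π * j / k with hθ
  set m : ℤ := round (θ / π) with hm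
  set φ : ℝ := θ - m * π with hφ
  have hsq : Real.sin θ ^ 2 = Real.sin φ ^ 2 := by
    have h1 : θ = φ + m * π := by ring
    rw [h1, Real.sin_add_int_mul_pi]
    rcases Int.even_or_odd m with h | h
    · rw [h.neg_one_zpow]; ring
    · rw [Odd.neg_one_zpow h]; ring
  have habs : |φ| ≤ π / 2 := by
    have h1 : |θ / π - m| ≤ 1/2 := abs_sub_round (θ / π)
    have h2 : φ = (θ / π - m) * π := by
      field_simp
      rw [hφ]; ring
    rw [h2, abs_mul, abs_of_pos pi_pos]
    calc |θ/π - m| * π ≤ (1/2) * π := by nlinarith [pi_pos]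
      _ = π / 2 := by ring
  have hlow : |l| / (2 * k) ≤ |φ| := by
    have h2 : φ = (l / 2 + π * (j - m * k)) / k := by
      rw [hφ, hθ]; push_cast; field_simp; ring
    set n : ℤ := j - m * k with hn
    have key : |l| / 2 ≤ |l / 2 + π * n| := by
      rcases eq_or_ne n 0 with h | h
      · simp [h, abs_div]
      · have hn1 : (1:ℝ) ≤ |(n:ℝ)| := by
          have : (1:ℤ) ≤ |n| := Int.one_le_abs h
          exact_mod_cast this
        have : π * 1 ≤ π * |(n:ℝ)| := by nlinarith [pi_pos]
        have habs2 : |π * (n:ℝ)| = π * |(n:ℝ)| := by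
          rw [abs_mul, abs_of_pos pi_pos]
        have h3 : |l / 2 + π * n| ≥ |π * (n:ℝ)| - |l/2| := by
          have := abs_sub_abs_le_abs_sub (π * (n:ℝ)) (-(l/2))
          rw [abs_neg] at this
          have h4 : π * (n:ℝ) - -(l/2) = l/2 + π * n := by ring
          rw [h4] at this
          linarith
        have h5 : |l/2| = |l|/2 := by rw [abs_div]; norm_num
        rw [habs2] at h3
        have : π ≤ π * |(n:ℝ)| := by linarith
        linarith
    have hphi : |φ| = |l / 2 + π * n| / k := by
      rw [h2, abs_div, abs_of_pos hkR, hn]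
      push_cast
      ring_nf
    rw [hphi, show |l| / (2 * k) = (|l| / 2) / k from by rw [div_div]]
    gcongr
  -- conclude
  have hjor : 2/π * |φ| ≤ |Real.sin φ| := Real.mul_abs_le_abs_sin habs
  have hchain : 2/π * (|l| / (2 * k)) ≤ |Real.sin φ| := by
    have h2π : (0:ℝ) < 2/π := by positivity
    nlinarith [hjor, hlow]
  have hnn : (0:ℝ) ≤ 2/π * (|l| / (2 * k)) := by positivity
  have hsq3 : (2/π * (|l| / (2 * k)))^2 ≤ |Real.sin φ|^2 := by
    exact pow_le_pow_left₀ hnn hchain 2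
  have heq : (2/π * (|l| / (2 * k)))^2 = l^2/(π^2 * (k:ℝ)^2) := by
    rw [mul_pow, div_pow, div_pow, sq_abs]
    field_simp
  rw [hsq, ← sq_abs (Real.sin φ)]
  linarith [heq ▸ hsq3]

-- L2: 1/sin²θ ≤ 1/θ² + π² for 0 < |θ| ≤ π/2
private lemma one_div_sin_sq_le {θ : ℝ} (h0 : 0 < |θ|) (h2 : |θ| ≤ π / 2) :
    1 / Real.sin θ ^ 2 ≤ 1 / θ ^ 2 + π ^ 2 := by
  -- reduce to x := |θ|
  set x := |θ| with hx
  have hsq : Real.sin θ ^ 2 = Real.sin x ^ 2 := by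
    rcases abs_cases θ with ⟨h, _⟩ | ⟨h, _⟩
    · rw [hx, h]
    · rw [hx, h, Real.sin_neg]; ring
  have hxsq : θ ^ 2 = x ^ 2 := (sq_abs θ).symm
  rw [hsq, hxsq]
  have hxpi : x < π := lt_of_le_of_lt h2 (by linarith [pi_pos])
  have hsinpos : 0 < Real.sin x := Real.sin_pos_of_pos_of_lt_pi h0 hxpi
  rcases le_or_gt x (1/2) with hc | hc
  · -- small x : use cubic bound
    have hx1 : x ≤ 1 := by linarith
    have hcube : x - x ^ 3 / 4 < Real.sin x := by have := Real.sin_gt_sub_cube h0; nlinarith [pow_pos h0 3]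
    have hsinle : Real.sin x ≤ x := Real.sin_le h0.le
    have hl : (15/16 : ℝ) * x ≤ Real.sin x := by nlinarith
    have hs2 : (15/16*x)^2 ≤ Real.sin x ^ 2 := pow_le_pow_left₀ (by positivity) hl 2
    have hd : x^2 - Real.sin x ^ 2 ≤ x^4/2 := by nlinarith [hcube, hsinle, hsinpos]
    have hpi : (9:ℝ) ≤ π^2 := by nlinarith [Real.pi_gt_three]
    rw [div_add' _ _ _ (by positivity), div_le_div_iff₀ (by positivity) (by positivity)]
    have t1 : (0:ℝ) ≤ x^2 * Real.sin x ^ 2 := by positivity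
    have t2 : (225/256:ℝ)*x^2*x^2 ≤ x^2 * Real.sin x ^ 2 := by nlinarith [hs2, sq_nonneg x]
    have t3 : 9 * (x^2 * Real.sin x ^ 2) ≤ π^2 * (x^2 * Real.sin x ^ 2) :=
      mul_le_mul_of_nonneg_right hpi t1
    nlinarith [t2, t3, hd, sq_nonneg x]
  · -- large x : Jordan
    have hjor : 2/π * x ≤ Real.sin x := Real.mul_le_sin h0.le h2
    have h1 : 1 / Real.sin x ^ 2 ≤ 1 / (2/π * x) ^ 2 := by
      apply one_div_le_one_div_of_le (by positivity)
      exact pow_le_pow_left₀ (by positivity) hjor 2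
    have h2' : 1 / (2/π * x) ^ 2 = π^2 / (4 * x^2) := by
      rw [mul_pow, div_pow]
      field_simp
      norm_num
    have h3 : π^2 / (4 * x^2) ≤ π^2 := by
      rw [div_le_iff₀ (by positivity)]
      have h4x : (1:ℝ) ≤ 4*x^2 := by nlinarith
      nlinarith [sq_nonneg π, h4x]
    have : (0:ℝ) ≤ 1 / x^2 := by positivity
    calc 1 / Real.sin x ^ 2 ≤ π^2 / (4*x^2) := h2' ▸ h1
      _ ≤ π^2 := h3
      _ ≤ 1/x^2 + π^2 := by linarith

set_option maxHeartbeats 1000000 in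
private lemma main_est {Hm Hp H : ℝ} (h0 : 0 < Hm) (h1 : Hp < 1) (hHm : Hm ≤ H) (hHp : H ≤ Hp)
    {k : ℕ} (hk : 2 ≤ k) {l : ℝ} (hl : 0 < |l|) (hl2 : |l| ≤ π) :
    0 ≤ (∑' j : ℤ, (1 - Real.cos l) ^ 2 / ((k : ℝ) ^ 2 * Real.sin (l / (2 * k) + π * j / k) ^ 2)
          * |l + 2 * π * j| ^ (-(1 + 2 * H)))
        - 4 * (1 - Real.cos l) ^ 2 * ∑' j : ℤ, |l + 2 * π * j| ^ (-(3 + 2 * H)) ∧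
    (∑' j : ℤ, (1 - Real.cos l) ^ 2 / ((k : ℝ) ^ 2 * Real.sin (l / (2 * k) + π * j / k) ^ 2)
          * |l + 2 * π * j| ^ (-(1 + 2 * H)))
        - 4 * (1 - Real.cos l) ^ 2 * ∑' j : ℤ, |l + 2 * π * j| ^ (-(3 + 2 * H))
      ≤ (π ^ 6 * (1 + (∑' j : ℤ, |(j:ℝ)| ^ (-(1 + 2 * Hm))) + 8 * (1 + 1/(2*Hm))))
          * |l| ^ (min 2 (3 - 2 * H)) / (k : ℝ) ^ (min 1 (2 * H)) := by
  -- numeric basics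
  have hπ1 : (1:ℝ) ≤ π := by linarith [Real.pi_gt_three]
  have hπ0 : (0:ℝ) < π := by linarith
  have hs0 : 0 < 2 * H := by linarith
  have hsm : 2 * Hm ≤ 2 * H := by linarith
  have hs2 : 2 * H < 2 := by linarith
  have hl0 : l ≠ 0 := by intro h; rw [h] at hl; simp at hl
  have hll : 0 < l ^ 2 := by
    have := pow_pos hl 2; rwa [sq_abs] at this
  have hk1 : (1:ℕ) ≤ k := by omega
  have hkR : (1:ℝ) ≤ (k:ℝ) := by exact_mod_cast hk1
  have hk0 : (0:ℝ) < (k:ℝ) := by linarith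
  have hkne : (k:ℝ) ≠ 0 := ne_of_gt hk0
  -- abbreviations
  set P : ℝ := (1 - Real.cos l) ^ 2 with hP
  set A : ℤ → ℝ := fun j => P / ((k : ℝ) ^ 2 * Real.sin (l / (2 * k) + π * j / k) ^ 2)
    * |l + 2 * π * j| ^ (-(1 + 2 * H)) with hA
  set B : ℤ → ℝ := fun j => |l + 2 * π * (j:ℝ)| ^ (-(3 + 2 * H)) with hB
  set w : ℤ → ℝ := fun j => |l + 2 * π * (j:ℝ)| ^ (-(1 + 2 * H)) with hw
  set θ : ℤ → ℝ := fun j => l / (2 * (k:ℝ)) + π * (j:ℝ) / (k:ℝ) with hθ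
  set Z : ℝ := ∑' j : ℤ, |(j:ℝ)| ^ (-(1 + 2 * Hm)) with hZ
  set Q : ℝ := 1 + 1/(2*Hm) with hQ
  set e : ℝ := min 2 (3 - 2 * H) with he
  set m : ℝ := min 1 (2 * H) with hm
  have hQ1 : 1 ≤ Q := by rw [hQ]; have : 0 < 1/(2*Hm) := by positivity
                         linarith
  have hZ0 : 0 ≤ Z := tsum_nonneg fun j => Real.rpow_nonneg (abs_nonneg _) _
  have he0 : 0 ≤ e := le_min (by norm_num) (by linarith)
  have he2 : e ≤ 2 := min_le_left _ _
  have he3 : e ≤ 3 - 2 * H := min_le_right _ _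
  have hm2H : m ≤ 2 * H := min_le_right _ _
  have hm1 : m ≤ 1 := min_le_left _ _
  have hm0 : 0 ≤ m := le_min (by norm_num) (by linarith)
  -- facts about x j := l + 2π j
  have hxj : ∀ j : ℤ, j ≠ 0 → π * |(j:ℝ)| ≤ |l + 2 * π * (j:ℝ)| := by
    intro j hj
    have hj1 : (1:ℝ) ≤ |(j:ℝ)| := by
      have : (1:ℤ) ≤ |j| := Int.one_le_abs hj
      calc (1:ℝ) ≤ ((|j|:ℤ):ℝ) := by exact_mod_cast this
        _ = |(j:ℝ)| := by rw [Int.cast_abs]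
    have h2 : |2 * π * (j:ℝ)| ≤ |l + 2 * π * (j:ℝ)| + |l| := by
      have := abs_add_le (l + 2 * π * (j:ℝ)) (-l)
      simpa using this
    have h3 : |2 * π * (j:ℝ)| = 2 * π * |(j:ℝ)| := by
      rw [abs_mul, abs_of_pos (by linarith : (0:ℝ) < 2 * π)]
    nlinarith [hj1, hl2, hπ0]
  have hxl : ∀ j : ℤ, |l| ≤ |l + 2 * π * (j:ℝ)| := by
    intro j
    rcases eq_or_ne j 0 with rfl | hj
    · simp
    · have := hxj j hj
      have hj1 : (1:ℝ) ≤ |(j:ℝ)| := by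
        have : (1:ℤ) ≤ |j| := Int.one_le_abs hj
        calc (1:ℝ) ≤ ((|j|:ℤ):ℝ) := by exact_mod_cast this
          _ = |(j:ℝ)| := by rw [Int.cast_abs]
      nlinarith
  have hxpos : ∀ j : ℤ, 0 < |l + 2 * π * (j:ℝ)| := fun j => lt_of_lt_of_le hl (hxl j)
  -- sin² lower bound and θ facts
  have hsin : ∀ j : ℤ, l ^ 2 / (π ^ 2 * (k:ℝ) ^ 2) ≤ Real.sin (θ j) ^ 2 := by
    intro j
    have := sin_sq_ge hk1 hl hl2 j
    simpa [hθ] using this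
  have hsinpos : ∀ j : ℤ, 0 < Real.sin (θ j) ^ 2 := by
    intro j
    exact lt_of_lt_of_le (by positivity) (hsin j)
  have hθne : ∀ j : ℤ, 0 < |θ j| := by
    intro j
    rcases eq_or_ne (θ j) 0 with h | h
    · have := hsinpos j; rw [h] at this; simp at this
    · exact abs_pos.mpr h
  have hθx : ∀ j : ℤ, l + 2 * π * (j:ℝ) = 2 * (k:ℝ) * θ j := by
    intro j; rw [hθ]; field_simp
  -- facts about w
  have hwnn : ∀ j : ℤ, 0 ≤ w j := fun j => Real.rpow_nonneg (abs_nonneg _) _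
  have hwj : ∀ j : ℤ, j ≠ 0 → w j ≤ |(j:ℝ)| ^ (-(1 + 2 * H)) := by
    intro j hj
    have hjpos : 0 < |(j:ℝ)| := by
      rw [abs_pos]; exact_mod_cast hj
    calc w j ≤ (π * |(j:ℝ)|) ^ (-(1 + 2 * H)) :=
          rpow_neg_anti (by positivity) (hxj j hj) (by linarith)
      _ ≤ |(j:ℝ)| ^ (-(1 + 2 * H)) :=
          rpow_neg_anti hjpos (by nlinarith) (by linarith)
  have hg' : Summable (fun j : ℤ => |(j:ℝ)| ^ (-(1 + 2 * H))) :=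
    Real.summable_abs_int_rpow (by linarith)
  have hwsum : Summable w := by
    apply Summable.of_norm_bounded_eventually hg'
    rw [Filter.eventually_cofinite]
    apply Set.Finite.subset (Set.finite_singleton (0:ℤ))
    intro j hj
    simp only [Set.mem_setOf_eq] at hj
    simp only [Set.mem_singleton_iff]
    by_contra hne
    exact hj (by rw [Real.norm_eq_abs, abs_of_nonneg (hwnn j)]; exact hwj j hne)
  -- facts about A
  have hA_eq : ∀ j : ℤ, A j = P / ((k : ℝ) ^ 2 * Real.sin (θ j) ^ 2) * w j := by
    intro j; rw [hA, hw, hθ]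
  have hAnn : ∀ j : ℤ, 0 ≤ A j := by
    intro j
    rw [hA_eq j]
    exact mul_nonneg (div_nonneg (sq_nonneg _) (by positivity)) (hwnn j)
  have hAle : ∀ j : ℤ, A j ≤ P * π ^ 2 / l ^ 2 * w j := by
    intro j
    rw [hA_eq j]
    apply mul_le_mul_of_nonneg_right _ (hwnn j)
    have hd : l ^ 2 / π ^ 2 ≤ (k:ℝ) ^ 2 * Real.sin (θ j) ^ 2 := by
      have h2 := mul_le_mul_of_nonneg_left (hsin j) (le_of_lt (by positivity : (0:ℝ) < (k:ℝ)^2))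
      calc l ^ 2 / π ^ 2 = (k:ℝ)^2 * (l ^ 2 / (π ^ 2 * (k:ℝ) ^ 2)) := by field_simp
        _ ≤ (k:ℝ)^2 * Real.sin (θ j) ^ 2 := h2
    calc P / ((k : ℝ) ^ 2 * Real.sin (θ j) ^ 2) ≤ P / (l ^ 2 / π ^ 2) :=
          div_le_div_of_nonneg_left (sq_nonneg _) (by positivity) hd
      _ = P * π ^ 2 / l ^ 2 := by field_simp
  have hAsum : Summable A :=
    Summable.of_nonneg_of_le hAnn hAle (hwsum.mul_left _)
  -- facts about B
  have hBsplit : ∀ j : ℤ, B j = ((l + 2 * π * (j:ℝ)) ^ 2)⁻¹ * w j := by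
    intro j
    simp only [hB, hw]
    rw [show (-(3 + 2 * H)) = (-(2:ℝ)) + (-(1 + 2 * H)) from by ring,
      Real.rpow_add (hxpos j)]
    congr 1
    rw [Real.rpow_neg (abs_nonneg _), show ((2:ℝ)) = ((2:ℕ):ℝ) from by norm_num,
      Real.rpow_natCast, sq_abs]
  have hBnn : ∀ j : ℤ, 0 ≤ B j := fun j => Real.rpow_nonneg (abs_nonneg _) _
  have hBle : ∀ j : ℤ, B j ≤ (1 / l ^ 2) * w j := by
    intro j
    rw [hBsplit j]
    apply mul_le_mul_of_nonneg_right _ (hwnn j)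
    have h2 : l ^ 2 ≤ (l + 2 * π * (j:ℝ)) ^ 2 := by
      have := hxl j
      nlinarith [sq_abs l, sq_abs (l + 2 * π * (j:ℝ)), abs_nonneg l]
    rw [one_div]
    exact inv_anti₀ hll h2
  have hBsum : Summable B :=
    Summable.of_nonneg_of_le hBnn hBle (hwsum.mul_left _)
  -- D and its bounds
  set D : ℤ → ℝ := fun j => A j - P * (4 * B j) with hD
  have hPBsum : Summable (fun j => P * (4 * B j)) := (hBsum.mul_left 4).mul_left P
  have hDsum : Summable D := hAsum.sub hPBsum
  have hx2 : ∀ j : ℤ, (l + 2 * π * (j:ℝ)) ^ 2 = 4 * (k:ℝ)^2 * θ j ^ 2 := by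
    intro j; rw [hθx j]; ring
  have hDform : ∀ j : ℤ,
      D j = (P / ((k:ℝ)^2 * Real.sin (θ j) ^ 2) - P / ((k:ℝ)^2 * θ j ^ 2)) * w j := by
    intro j
    rw [hD]
    simp only
    rw [hA_eq j, hBsplit j, hx2 j]
    have hθ0 : θ j ≠ 0 := by
      intro h; have := hθne j; rw [h] at this; simp at this
    field_simp
  have hDnn : ∀ j : ℤ, 0 ≤ D j := by
    intro j
    rw [hDform j]
    apply mul_nonneg _ (hwnn j)
    rw [sub_nonneg]
    apply div_le_div_of_nonneg_left (sq_nonneg _) (mul_pos (by positivity) (hsinpos j))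
    have := Real.sin_sq_le_sq (x := θ j)
    nlinarith [sq_nonneg (k:ℝ)]
  have hDle : ∀ j : ℤ, D j ≤ P * π ^ 2 / (k:ℝ) ^ 2 * w j
      + P * π ^ 2 / l ^ 2 * (if (k:ℤ) ≤ 2 * |j| then w j else 0) := by
    intro j
    by_cases hc : |θ j| ≤ π / 2
    · have hL2 := one_div_sin_sq_le (hθne j) hc
      have hkey : P / ((k:ℝ)^2 * Real.sin (θ j) ^ 2) - P / ((k:ℝ)^2 * θ j ^ 2)
          ≤ P * π ^ 2 / (k:ℝ) ^ 2 := by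
        have hP0 : (0:ℝ) ≤ P / (k:ℝ)^2 := by positivity
        have h3 := mul_le_mul_of_nonneg_left hL2 hP0
        have hθ0 : θ j ≠ 0 := by
          intro h; have := hθne j; rw [h] at this; simp at this
        have hs0' : Real.sin (θ j) ^ 2 ≠ 0 := ne_of_gt (hsinpos j)
        have e1 : P / (k:ℝ)^2 * (1 / Real.sin (θ j) ^ 2) = P / ((k:ℝ)^2 * Real.sin (θ j) ^ 2) := by
          field_simp
        have e2 : P / (k:ℝ)^2 * (1 / θ j ^ 2 + π ^ 2)
            = P / ((k:ℝ)^2 * θ j ^ 2) + P * π ^ 2 / (k:ℝ)^2 := by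
          field_simp
        rw [e1, e2] at h3
        linarith
    
      have h4 : D j ≤ P * π ^ 2 / (k:ℝ) ^ 2 * w j := by
        rw [hDform j]
        exact mul_le_mul_of_nonneg_right hkey (hwnn j)
      have h5 : (0:ℝ) ≤ P * π ^ 2 / l ^ 2 * (if (k:ℤ) ≤ 2 * |j| then w j else 0) := by
        apply mul_nonneg (by positivity)
        split
        · exact hwnn j
        · exact le_rfl
      linarith
    · push_neg at hc
      have hjk : (k:ℤ) ≤ 2 * |j| := by
        have h6 : |θ j| ≤ (|l| / 2 + π * |(j:ℝ)|) / (k:ℝ) := by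
          rw [hθ]
          simp only
          calc |l / (2 * (k:ℝ)) + π * (j:ℝ) / (k:ℝ)|
              ≤ |l / (2 * (k:ℝ))| + |π * (j:ℝ) / (k:ℝ)| := abs_add_le _ _
            _ = (|l| / 2 + π * |(j:ℝ)|) / (k:ℝ) := by
                have e1 : |l / (2*(k:ℝ))| = |l|/(2*(k:ℝ)) := by
                  rw [abs_div, abs_of_pos (by linarith : (0:ℝ) < 2*(k:ℝ))]
                have e2 : |π * (j:ℝ) / (k:ℝ)| = π * |(j:ℝ)| / (k:ℝ) := by
                  rw [abs_div, abs_mul, abs_of_pos hπ0, abs_of_pos hk0]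
                rw [e1, e2]
                ring
        have h7 : π / 2 * (k:ℝ) < |l| / 2 + π * |(j:ℝ)| := by
          have := lt_of_lt_of_le hc h6
          rw [lt_div_iff₀ hk0] at this
          linarith
        have h8 : ((k:ℝ) - 1) < 2 * |(j:ℝ)| := by nlinarith
        have h9 : ((k:ℤ):ℝ) - 1 < 2 * ((|j|:ℤ):ℝ) := by
          rw [Int.cast_abs]
          push_cast
          push_cast at h8
          linarith
        have : (k:ℤ) - 1 < 2 * |j| := by exact_mod_cast h9
        omega
      rw [if_pos hjk]
      have hD_A : D j ≤ A j := by
        rw [hD]; simp only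
        nlinarith [hBnn j, sq_nonneg (1 - Real.cos l)]
      have := (hD_A.trans (hAle j))
      have h5 : (0:ℝ) ≤ P * π ^ 2 / (k:ℝ) ^ 2 * w j := by positivity
      linarith
  -- sums
  set v : ℤ → ℝ := fun j => if (k:ℤ) ≤ 2 * |j| then w j else 0 with hv
  have hvnn : ∀ j : ℤ, 0 ≤ v j := by
    intro j; rw [hv]; dsimp only; split
    exacts [hwnn j, le_rfl]
  have hvle : ∀ j : ℤ, v j ≤ w j := by
    intro j; rw [hv]; dsimp only; split
    exacts [le_rfl, hwnn j]
  have hvsum : Summable v := Summable.of_nonneg_of_le hvnn hvle hwsum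
  have husum : Summable (fun j => P * π ^ 2 / l ^ 2 * v j) := hvsum.mul_left _
  have hE1sum : Summable (fun j => P * π ^ 2 / (k:ℝ) ^ 2 * w j) := hwsum.mul_left _
  have hT : ∑' j, D j ≤ P * π ^ 2 / (k:ℝ) ^ 2 * ∑' j, w j + P * π ^ 2 / l ^ 2 * ∑' j, v j := by
    calc ∑' j, D j ≤ ∑' j, (P * π ^ 2 / (k:ℝ) ^ 2 * w j + P * π ^ 2 / l ^ 2 * v j) :=
          Summable.tsum_le_tsum hDle hDsum (hE1sum.add husum)
      _ = (∑' j, P * π ^ 2 / (k:ℝ) ^ 2 * w j) + ∑' j, P * π ^ 2 / l ^ 2 * v j :=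
          Summable.tsum_add hE1sum husum
      _ = P * π ^ 2 / (k:ℝ) ^ 2 * ∑' j, w j + P * π ^ 2 / l ^ 2 * ∑' j, v j := by
          rw [tsum_mul_left, tsum_mul_left]
  -- bound for ∑ w
  have hZsum : Summable (fun j : ℤ => |(j:ℝ)| ^ (-(1 + 2 * Hm))) :=
    Real.summable_abs_int_rpow (by linarith)
  have hw0 : w 0 = |l| ^ (-(1 + 2 * H)) := by rw [hw]; norm_num
  have hone_le : ∀ j : ℤ, j ≠ 0 → (1:ℝ) ≤ |(j:ℝ)| := by
    intro j hj
    have : (1:ℤ) ≤ |j| := Int.one_le_abs hj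
    calc (1:ℝ) ≤ ((|j|:ℤ):ℝ) := by exact_mod_cast this
      _ = |(j:ℝ)| := by rw [Int.cast_abs]
  have hitele : ∀ j : ℤ, (if j = 0 then 0 else w j) ≤ |(j:ℝ)| ^ (-(1 + 2 * Hm)) := by
    intro j
    split
    · exact Real.rpow_nonneg (abs_nonneg _) _
    · next h =>
        calc w j ≤ |(j:ℝ)| ^ (-(1 + 2 * H)) := hwj j h
          _ ≤ |(j:ℝ)| ^ (-(1 + 2 * Hm)) :=
              Real.rpow_le_rpow_of_exponent_le (hone_le j h) (by linarith)
  have hitesum : Summable (fun j : ℤ => if j = 0 then 0 else w j) := by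
    apply Summable.of_nonneg_of_le _ _ hwsum
    · intro j; split; exacts [le_rfl, hwnn j]
    · intro j; split; exacts [hwnn j, le_rfl]
  have hWbound : ∑' j, w j ≤ |l| ^ (-(1 + 2 * H)) + Z := by
    calc ∑' j, w j = w 0 + ∑' j, (if j = 0 then 0 else w j) := Summable.tsum_eq_add_tsum_ite hwsum 0
      _ ≤ |l| ^ (-(1 + 2 * H)) + Z := by
          apply add_le_add (le_of_eq hw0)
          rw [hZ]
          exact Summable.tsum_le_tsum hitele hitesum hZsum
  -- bound for ∑ v
  set M : ℕ := (k + 1) / 2 with hMdef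
  have hM1 : 1 ≤ M := by omega
  have h2M : k ≤ 2 * M := by omega
  set t : ℕ → ℝ := fun n => if M ≤ n then (n:ℝ) ^ (-(1 + 2 * H)) else 0 with ht
  have htsum : Summable t := summable_t hs0 M
  have htnn : ∀ n : ℕ, 0 ≤ t n := by
    intro n; rw [ht]; dsimp only; split
    · exact Real.rpow_nonneg (Nat.cast_nonneg _) _
    · exact le_rfl
  set v' : ℤ → ℝ := fun j => if (k:ℤ) ≤ 2 * |j| then |(j:ℝ)| ^ (-(1 + 2 * H)) else 0 with hv'
  have hv'le : ∀ j : ℤ, v j ≤ v' j := by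
    intro j
    rw [hv, hv']; dsimp only
    split
    · next h =>
        apply hwj
        intro rfl0
        rw [rfl0] at h
        simp at h
        omega
    · exact le_rfl
  have hv'nn : ∀ j : ℤ, 0 ≤ v' j := by
    intro j; rw [hv']; dsimp only; split
    · exact Real.rpow_nonneg (abs_nonneg _) _
    · exact le_rfl
  have hv'sum : Summable v' := by
    apply Summable.of_nonneg_of_le hv'nn _ hg'
    intro j; rw [hv']; dsimp only; split
    exacts [le_rfl, Real.rpow_nonneg (abs_nonneg _) _]
  have hnat : ∀ n : ℕ, v' (n:ℤ) = t n := by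
    intro n
    rw [hv', ht]; dsimp only
    have hcond : ((k:ℤ) ≤ 2 * |(n:ℤ)|) ↔ (M ≤ n) := by
      rw [Int.abs_natCast]; omega
    by_cases hMn : M ≤ n
    · rw [if_pos (hcond.mpr hMn), if_pos hMn]
      congr 1
      push_cast
      rw [abs_of_nonneg (by positivity)]
    · rw [if_neg (fun hcc => hMn (hcond.mp hcc)), if_neg hMn]
  have hneg : ∀ n : ℕ, v' (-((n:ℤ) + 1)) = t (n + 1) := by
    intro n
    rw [hv', ht]; dsimp only
    have habs : |(-((n:ℤ) + 1))| = (n:ℤ) + 1 := by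
      rw [abs_neg, abs_of_nonneg (by positivity)]
    have hcond : ((k:ℤ) ≤ 2 * |(-((n:ℤ) + 1))|) ↔ (M ≤ n + 1) := by
      rw [habs]; omega
    by_cases hMn : M ≤ n + 1
    · rw [if_pos (hcond.mpr hMn), if_pos hMn]
      congr 1
      push_cast
      rw [abs_neg, abs_of_nonneg (by positivity)]
    · rw [if_neg (fun hcc => hMn (hcond.mp hcc)), if_neg hMn]
  have hsummand1 : Summable (fun n : ℕ => v' (n:ℤ)) := htsum.congr (fun n => (hnat n).symm)
  have hsummand2 : Summable (fun n : ℕ => v' (-((n:ℤ) + 1))) :=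
    ((summable_nat_add_iff 1).mpr htsum).congr (fun n => (hneg n).symm)
  have hsplit : ∑' j : ℤ, v' j = (∑' n : ℕ, t n) + ∑' n : ℕ, t (n + 1) := by
    rw [tsum_of_nat_of_neg_add_one hsummand1 hsummand2]
    congr 1
    · exact tsum_congr hnat
    · exact tsum_congr hneg
  have hshift : ∑' n : ℕ, t (n + 1) ≤ ∑' n : ℕ, t n :=
    Summable.tsum_le_tsum_of_inj (fun n => n + 1) (add_left_injective 1)
      (fun c _ => htnn c) (fun n => le_rfl) ((summable_nat_add_iff 1).mpr htsum) htsum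
  have htail : ∑' n : ℕ, t n ≤ (1 + 1/(2*H)) * (M:ℝ) ^ (-(2*H)) := tsum_tail_le hs0 hM1
  have hMk : (k:ℝ)/2 ≤ (M:ℝ) := by
    have : (k:ℝ) ≤ 2 * (M:ℝ) := by exact_mod_cast h2M
    linarith
  have hM4 : (M:ℝ) ^ (-(2*H)) ≤ 4 * (k:ℝ) ^ (-(2*H)) := by
    have hstep1 : (M:ℝ) ^ (-(2*H)) ≤ ((k:ℝ)/2) ^ (-(2*H)) :=
      rpow_neg_anti (by positivity) hMk (by linarith)
    have hstep2 : ((k:ℝ)/2) ^ (-(2*H)) = (k:ℝ) ^ (-(2*H)) * (2:ℝ) ^ (2*H) := by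
      rw [Real.div_rpow hk0.le (by norm_num : (0:ℝ) ≤ 2), Real.rpow_neg (by norm_num : (0:ℝ) ≤ 2)]
      field_simp
    have hstep3 : (2:ℝ) ^ (2*H) ≤ 4 := by
      have h4 : (2:ℝ) ^ ((2:ℕ):ℝ) = 4 := by rw [Real.rpow_natCast]; norm_num
      calc (2:ℝ) ^ (2*H) ≤ (2:ℝ) ^ ((2:ℕ):ℝ) :=
            Real.rpow_le_rpow_of_exponent_le one_le_two (by push_cast; linarith)
        _ = 4 := h4
    have hknn : (0:ℝ) ≤ (k:ℝ) ^ (-(2*H)) := Real.rpow_nonneg hk0.le _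
    calc (M:ℝ) ^ (-(2*H)) ≤ (k:ℝ) ^ (-(2*H)) * (2:ℝ) ^ (2*H) := by rw [← hstep2]; exact hstep1
      _ ≤ (k:ℝ) ^ (-(2*H)) * 4 := mul_le_mul_of_nonneg_left hstep3 hknn
      _ = 4 * (k:ℝ) ^ (-(2*H)) := by ring
  have hQH : 1 + 1/(2*H) ≤ Q := by
    rw [hQ]
    have : 1/(2*H) ≤ 1/(2*Hm) := one_div_le_one_div_of_le (by linarith) hsm
    linarith
  have hVbound : ∑' j, v j ≤ 8 * Q * (k:ℝ) ^ (-(2*H)) := by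
    have hMnn : (0:ℝ) ≤ (M:ℝ) ^ (-(2*H)) := Real.rpow_nonneg (Nat.cast_nonneg _) _
    have hknn : (0:ℝ) ≤ (k:ℝ) ^ (-(2*H)) := Real.rpow_nonneg hk0.le _
    have hQH0 : (0:ℝ) ≤ 1 + 1/(2*H) := by positivity
    calc ∑' j, v j ≤ ∑' j, v' j := Summable.tsum_le_tsum hv'le hvsum hv'sum
      _ = (∑' n : ℕ, t n) + ∑' n : ℕ, t (n + 1) := hsplit
      _ ≤ 2 * ∑' n : ℕ, t n := by linarith [hshift]
      _ ≤ 2 * ((1 + 1/(2*H)) * (M:ℝ) ^ (-(2*H))) := by linarith [htail, (tsum_nonneg htnn : 0 ≤ ∑' n : ℕ, t n)]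
      _ ≤ 2 * (Q * (4 * (k:ℝ) ^ (-(2*H)))) := by
          have := mul_le_mul hQH hM4 hMnn (by linarith : (0:ℝ) ≤ Q)
          linarith
      _ = 8 * Q * (k:ℝ) ^ (-(2*H)) := by ring
  -- final numeric assembly
  have hPnn : (0:ℝ) ≤ P := sq_nonneg _
  clear_value P A B w θ Z Q e m v t v' M D
  have hle_nn : 0 ≤ |l| ^ e := Real.rpow_nonneg (abs_nonneg l) e
  have hkm_nn : 0 ≤ (k:ℝ) ^ (-m) := Real.rpow_nonneg hk0.le _
  have hQ0 : (0:ℝ) ≤ Q := le_trans zero_le_one hQ1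
  have hLpow : ∀ a : ℝ, e ≤ a → a ≤ 4 → |l| ^ a ≤ π ^ 4 * |l| ^ e := by
    intro a ha h4
    have h5 : |l| ^ a = |l| ^ e * |l| ^ (a - e) := by
      rw [← Real.rpow_add hl]
      congr 1
      ring
    have h6 : |l| ^ (a - e) ≤ π ^ (a - e) := Real.rpow_le_rpow (abs_nonneg l) hl2 (by linarith)
    have h7 : π ^ (a - e) ≤ π ^ (((4:ℕ)):ℝ) :=
      Real.rpow_le_rpow_of_exponent_le hπ1 (by push_cast; linarith)
    have h8 : π ^ (((4:ℕ)):ℝ) = π ^ (4:ℕ) := Real.rpow_natCast π 4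
    calc |l| ^ a = |l| ^ e * |l| ^ (a - e) := h5
      _ ≤ |l| ^ e * π ^ (4:ℕ) :=
          mul_le_mul_of_nonneg_left (by rw [← h8]; exact h6.trans h7) hle_nn
      _ = π ^ 4 * |l| ^ e := by ring
  have hl4e : |l| ^ ((4:ℝ)) = l ^ 4 := by
    rw [show ((4:ℝ)) = ((4:ℕ):ℝ) from by norm_num, Real.rpow_natCast, ← abs_pow,
      abs_of_nonneg (by positivity : (0:ℝ) ≤ l ^ 4)]
  have hl2e : |l| ^ ((2:ℝ)) = l ^ 2 := by
    rw [show ((2:ℝ)) = ((2:ℕ):ℝ) from by norm_num, Real.rpow_natCast, sq_abs]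
  have hcos : 1 - Real.cos l ≤ l ^ 2 / 2 := by
    have := Real.one_sub_sq_div_two_lt_cos (x := l) hl0
    linarith
  have hcos0 : 0 ≤ 1 - Real.cos l := by linarith [Real.cos_le_one l]
  have hP4 : P ≤ |l| ^ ((4:ℝ)) / 4 := by
    have h1 : P ≤ (l ^ 2 / 2) ^ 2 := by rw [hP]; exact pow_le_pow_left₀ hcos0 hcos 2
    have h2 : (l ^ 2 / 2) ^ 2 = l ^ 4 / 4 := by ring
    rw [hl4e]
    linarith
  have hP4' : P ≤ π ^ 4 / 4 * |l| ^ e := by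
    have := hLpow 4 (by linarith) le_rfl
    linarith
  have hk2m : 1 / (k:ℝ) ^ 2 ≤ (k:ℝ) ^ (-m) := by
    have h1 : (k:ℝ) ^ (-(((2:ℕ)):ℝ)) ≤ (k:ℝ) ^ (-m) :=
      Real.rpow_le_rpow_of_exponent_le hkR (by push_cast; linarith)
    have h2 : (k:ℝ) ^ (-(((2:ℕ)):ℝ)) = 1 / (k:ℝ) ^ 2 := by
      rw [Real.rpow_neg hk0.le, Real.rpow_natCast, one_div]
    exact h2 ▸ h1
  have hksm : (k:ℝ) ^ (-(2*H)) ≤ (k:ℝ) ^ (-m) :=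
    Real.rpow_le_rpow_of_exponent_le hkR (neg_le_neg hm2H)
  have hb1 : P * |l| ^ (-(1 + 2*H)) ≤ π ^ 4 / 4 * |l| ^ e := by
    have hwl : (0:ℝ) ≤ |l| ^ (-(1 + 2*H)) := Real.rpow_nonneg (abs_nonneg l) _
    have h1 : P * |l| ^ (-(1 + 2*H)) ≤ |l| ^ ((4:ℝ)) / 4 * |l| ^ (-(1 + 2*H)) :=
      mul_le_mul_of_nonneg_right hP4 hwl
    have h2 : |l| ^ ((4:ℝ)) * |l| ^ (-(1 + 2*H)) = |l| ^ (3 - 2*H) := by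
      rw [← Real.rpow_add hl]
      congr 1
      ring
    have h3 : |l| ^ (3 - 2*H) ≤ π ^ 4 * |l| ^ e := hLpow _ he3 (by linarith)
    calc P * |l| ^ (-(1 + 2*H)) ≤ |l| ^ ((4:ℝ)) / 4 * |l| ^ (-(1 + 2*H)) := h1
      _ = |l| ^ (3 - 2*H) / 4 := by rw [← h2]; ring
      _ ≤ π ^ 4 * |l| ^ e / 4 := by linarith
      _ = π ^ 4 / 4 * |l| ^ e := by ring
  have hb2 : P * Z ≤ π ^ 4 / 4 * |l| ^ e * Z := mul_le_mul_of_nonneg_right hP4' hZ0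
  have hb3 : P / l ^ 2 ≤ π ^ 4 / 4 * |l| ^ e := by
    have h1 : P / l ^ 2 ≤ (|l| ^ ((4:ℝ)) / 4) / l ^ 2 := by gcongr
    have h2 : (|l| ^ ((4:ℝ)) / 4) / l ^ 2 = l ^ 2 / 4 := by
      rw [hl4e]
      field_simp
    have h3 : |l| ^ ((2:ℝ)) ≤ π ^ 4 * |l| ^ e := hLpow 2 he2 (by norm_num)
    rw [hl2e] at h3
    linarith
  have hdiff : (∑' j, A j) - 4 * P * (∑' j, B j) = ∑' j, D j := by
    have h1 : (∑' j, D j) = ∑' j, (A j - P * (4 * B j)) := tsum_congr (fun j => by rw [hD])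
    rw [h1, Summable.tsum_sub hAsum hPBsum, tsum_mul_left, tsum_mul_left]
    ring
  have hnonneg : 0 ≤ ∑' j, D j := tsum_nonneg hDnn
  have hsum1_nn : (0:ℝ) ≤ π ^ 2 * (π ^ 4 / 4 * |l| ^ e + π ^ 4 / 4 * |l| ^ e * Z) := by
    have ha : (0:ℝ) ≤ π ^ 4 / 4 * |l| ^ e := by positivity
    exact mul_nonneg (by positivity) (add_nonneg ha (mul_nonneg ha hZ0))
  have hterm1 : P * π ^ 2 / (k:ℝ) ^ 2 * (|l| ^ (-(1 + 2*H)) + Z)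
      ≤ π ^ 2 * (π ^ 4 / 4 * |l| ^ e + π ^ 4 / 4 * |l| ^ e * Z) * ((k:ℝ) ^ (-m)) := by
    calc P * π ^ 2 / (k:ℝ) ^ 2 * (|l| ^ (-(1 + 2*H)) + Z)
        = π ^ 2 * (P * |l| ^ (-(1 + 2*H)) + P * Z) * (1 / (k:ℝ) ^ 2) := by ring
      _ ≤ π ^ 2 * (π ^ 4 / 4 * |l| ^ e + π ^ 4 / 4 * |l| ^ e * Z) * ((k:ℝ) ^ (-m)) := by
          apply mul_le_mul _ hk2m (by positivity) hsum1_nn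
          exact mul_le_mul_of_nonneg_left (add_le_add hb1 hb2) (by positivity)
  have hterm2_nn : (0:ℝ) ≤ π ^ 2 * 8 * Q * (π ^ 4 / 4 * |l| ^ e) := by
    have h1 : (0:ℝ) ≤ π ^ 2 * 8 * Q := by
      have : (0:ℝ) ≤ π ^ 2 * 8 := by positivity
      exact mul_nonneg this hQ0
    exact mul_nonneg h1 (by positivity)
  have hterm2 : P * π ^ 2 / l ^ 2 * (8 * Q * (k:ℝ) ^ (-(2*H)))
      ≤ π ^ 2 * 8 * Q * (π ^ 4 / 4 * |l| ^ e) * ((k:ℝ) ^ (-m)) := by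
    calc P * π ^ 2 / l ^ 2 * (8 * Q * (k:ℝ) ^ (-(2*H)))
        = π ^ 2 * 8 * Q * (P / l ^ 2) * ((k:ℝ) ^ (-(2*H))) := by ring
      _ ≤ π ^ 2 * 8 * Q * (π ^ 4 / 4 * |l| ^ e) * ((k:ℝ) ^ (-m)) := by
          apply mul_le_mul _ hksm (Real.rpow_nonneg hk0.le _) hterm2_nn
          apply mul_le_mul_of_nonneg_left hb3
          have : (0:ℝ) ≤ π ^ 2 * 8 := by positivity
          exact mul_nonneg this hQ0
  have hfinal : ∑' j, D j ≤ π ^ 6 * (1 + Z + 8 * Q) * |l| ^ e * ((k:ℝ) ^ (-m)) := by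
    have hc1 : (0:ℝ) ≤ P * π ^ 2 / (k:ℝ) ^ 2 :=
      div_nonneg (mul_nonneg hPnn (sq_nonneg _)) (sq_nonneg _)
    have hc2 : (0:ℝ) ≤ P * π ^ 2 / l ^ 2 :=
      div_nonneg (mul_nonneg hPnn (sq_nonneg _)) (sq_nonneg _)
    have m1 : P * π ^ 2 / (k:ℝ) ^ 2 * (∑' j, w j)
        ≤ P * π ^ 2 / (k:ℝ) ^ 2 * (|l| ^ (-(1 + 2*H)) + Z) :=
      mul_le_mul_of_nonneg_left hWbound hc1
    have m2 : P * π ^ 2 / l ^ 2 * (∑' j, v j)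
        ≤ P * π ^ 2 / l ^ 2 * (8 * Q * (k:ℝ) ^ (-(2*H))) :=
      mul_le_mul_of_nonneg_left hVbound hc2
    have hfac : (0:ℝ) ≤ π ^ 6 * (|l| ^ e * ((k:ℝ) ^ (-m))) := by positivity
    have hcollect :
        π ^ 2 * (π ^ 4 / 4 * |l| ^ e + π ^ 4 / 4 * |l| ^ e * Z) * ((k:ℝ) ^ (-m))
          + π ^ 2 * 8 * Q * (π ^ 4 / 4 * |l| ^ e) * ((k:ℝ) ^ (-m))
        ≤ π ^ 6 * (1 + Z + 8 * Q) * |l| ^ e * ((k:ℝ) ^ (-m)) := by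
      calc π ^ 2 * (π ^ 4 / 4 * |l| ^ e + π ^ 4 / 4 * |l| ^ e * Z) * ((k:ℝ) ^ (-m))
          + π ^ 2 * 8 * Q * (π ^ 4 / 4 * |l| ^ e) * ((k:ℝ) ^ (-m))
          = π ^ 6 * (|l| ^ e * ((k:ℝ) ^ (-m))) * ((1 + Z)/4 + 2 * Q) := by ring
        _ ≤ π ^ 6 * (|l| ^ e * ((k:ℝ) ^ (-m))) * (1 + Z + 8 * Q) :=
            mul_le_mul_of_nonneg_left (by linarith) hfac
        _ = π ^ 6 * (1 + Z + 8 * Q) * |l| ^ e * ((k:ℝ) ^ (-m)) := by ring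
    linarith [hT, m1, m2, hterm1, hterm2, hcollect]
  constructor
  · linarith [hdiff, hnonneg]
  · have hgoal : π ^ 6 * (1 + Z + 8 * Q) * |l| ^ e / (k:ℝ) ^ m
        = π ^ 6 * (1 + Z + 8 * Q) * |l| ^ e * ((k:ℝ) ^ (-m)) := by
      rw [Real.rpow_neg hk0.le, div_eq_mul_inv]
    rw [hgoal]
    linarith [hdiff, hfinal]

/-- `f_{H,k}(λ) = Γ(2H+1) sin(πH) Σ_{j∈ℤ} (1-cos λ)²/(k² sin²(λ/(2k)+πj/k)) |λ+2πj|^{-(1+2H)}`. -/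
noncomputable def fHk (H : ℝ) (k : ℕ) (l : ℝ) : ℝ :=
  Real.Gamma (2 * H + 1) * Real.sin (π * H) *
    ∑' j : ℤ, (1 - Real.cos l) ^ 2 / ((k : ℝ) ^ 2 * Real.sin (l / (2 * k) + π * j / k) ^ 2)
      * |l + 2 * π * j| ^ (-(1 + 2 * H))

/-- `f_{H,∞}(λ) = 4 Γ(2H+1) sin(πH) (1-cos λ)² Σ_{j∈ℤ} |λ+2πj|^{-(3+2H)}`. -/
noncomputable def fHinf (H l : ℝ) : ℝ :=
  4 * Real.Gamma (2 * H + 1) * Real.sin (π * H) * (1 - Real.cos l) ^ 2 *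
    ∑' j : ℤ, |l + 2 * π * j| ^ (-(3 + 2 * H))

/-- There is a constant `C`, uniform in `H ∈ [H₋, H₊]` and `k ≥ 2`, such that
`|f_{H,k}(λ) - f_{H,∞}(λ)| ≤ C |λ|^{min(2, 3-2H)} / k^{min(1, 2H)}` for `0 < |λ| ≤ π`;
in particular `f_{H,k} → f_{H,∞}` uniformly in `H` and `λ ≠ 0` as `k → ∞`. -/
theorem fHk_tendsto_fHinf (Hm Hp : ℝ) (h0 : 0 < Hm) (hmp : Hm ≤ Hp) (h1 : Hp < 1) :
    (∃ C : ℝ, 0 < C ∧ ∀ H ∈ Set.Icc Hm Hp, ∀ k : ℕ, 2 ≤ k → ∀ l : ℝ,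
        0 < |l| → |l| ≤ π →
        |fHk H k l - fHinf H l|
          ≤ C * |l| ^ (min 2 (3 - 2 * H)) / (k : ℝ) ^ (min 1 (2 * H))) ∧
      (∀ ε : ℝ, 0 < ε → ∃ K : ℕ, ∀ k : ℕ, K ≤ k → ∀ H ∈ Set.Icc Hm Hp, ∀ l : ℝ,
        0 < |l| → |l| ≤ π → |fHk H k l - fHinf H l| ≤ ε) := by
  have hπ1 : (1:ℝ) ≤ π := by linarith [Real.pi_gt_three]
  -- uniform bound for Γ(2H+1)
  obtain ⟨CΓ, hCΓ1, hCΓ⟩ : ∃ CΓ : ℝ, 1 ≤ CΓ ∧ ∀ H ∈ Set.Icc Hm Hp, Real.Gamma (2*H+1) ≤ CΓ := by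
    have hcont : ContinuousOn (fun H : ℝ => Real.Gamma (2*H+1)) (Set.Icc Hm Hp) := by
      intro H hH
      apply ContinuousAt.continuousWithinAt
      have hpos : 0 < 2*H+1 := by have := hH.1; nlinarith
      have hne : ∀ n : ℕ, 2*H+1 ≠ -(n:ℝ) := by
        intro n hcontra
        have h3 : -((n:ℝ)) ≤ 0 := neg_nonpos.mpr (Nat.cast_nonneg n)
        rw [hcontra] at hpos
        linarith
      have hg : ContinuousAt Real.Gamma (2*H+1) :=
        (Real.differentiableAt_Gamma hne).continuousAt
      have hf : ContinuousAt (fun H : ℝ => 2*H+1) H := by fun_prop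
      exact ContinuousAt.comp (g := Real.Gamma) (f := fun H : ℝ => 2*H+1) hg hf
    obtain ⟨H₀, _, hH₀⟩ := isCompact_Icc.exists_isMaxOn (Set.nonempty_Icc.mpr hmp) hcont
    exact ⟨max (Real.Gamma (2*H₀+1)) 1, le_max_right _ _,
      fun H hH => le_trans (hH₀ hH) (le_max_left _ _)⟩
  have hCΓ0 : (0:ℝ) < CΓ := lt_of_lt_of_le one_pos hCΓ1
  set Z : ℝ := ∑' j : ℤ, |(j:ℝ)| ^ (-(1 + 2 * Hm)) with hZ
  have hZ0 : 0 ≤ Z := tsum_nonneg fun j => Real.rpow_nonneg (abs_nonneg _) _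
  set Cst : ℝ := π ^ 6 * (1 + Z + 8 * (1 + 1/(2*Hm))) with hCst
  have hCst0 : 0 < Cst := by
    rw [hCst]
    have h8 : (0:ℝ) < 1 + 1/(2*Hm) := by positivity
    have : (0:ℝ) < π ^ 6 := by positivity
    nlinarith
  have part1 : ∀ H ∈ Set.Icc Hm Hp, ∀ k : ℕ, 2 ≤ k → ∀ l : ℝ, 0 < |l| → |l| ≤ π →
      |fHk H k l - fHinf H l|
        ≤ (CΓ * Cst) * |l| ^ (min 2 (3 - 2 * H)) / (k : ℝ) ^ (min 1 (2 * H)) := by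
    intro H hH k hk l hl hl2
    obtain ⟨hd0, hdle⟩ := main_est h0 h1 hH.1 hH.2 hk hl hl2
    set S1 : ℝ := ∑' j : ℤ, (1 - Real.cos l) ^ 2
        / ((k : ℝ) ^ 2 * Real.sin (l / (2 * k) + π * j / k) ^ 2)
        * |l + 2 * π * j| ^ (-(1 + 2 * H)) with hS1
    set S2 : ℝ := ∑' j : ℤ, |l + 2 * π * (j:ℝ)| ^ (-(3 + 2 * H)) with hS2
    have hΓ0 : 0 ≤ Real.Gamma (2*H+1) :=
      (Real.Gamma_pos_of_pos (by have := hH.1; nlinarith)).le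
    have hsin0 : 0 ≤ Real.sin (π*H) := by
      apply Real.sin_nonneg_of_nonneg_of_le_pi
      · have := hH.1; nlinarith [Real.pi_pos]
      · have := hH.2; nlinarith [Real.pi_pos]
    have hsin1 : Real.sin (π*H) ≤ 1 := Real.sin_le_one _
    have heq : fHk H k l - fHinf H l
        = Real.Gamma (2*H+1) * Real.sin (π*H) * (S1 - 4 * (1 - Real.cos l) ^ 2 * S2) := by
      rw [fHk, fHinf, ← hS1, ← hS2]
      ring
    rw [heq, abs_of_nonneg (mul_nonneg (mul_nonneg hΓ0 hsin0) hd0)]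
    have h5 : Real.Gamma (2*H+1) * Real.sin (π*H) ≤ CΓ := by
      calc Real.Gamma (2*H+1) * Real.sin (π*H) ≤ CΓ * 1 :=
            mul_le_mul (hCΓ H hH) hsin1 hsin0 hCΓ0.le
        _ = CΓ := mul_one _
    calc Real.Gamma (2*H+1) * Real.sin (π*H) * (S1 - 4 * (1 - Real.cos l) ^ 2 * S2)
        ≤ CΓ * (S1 - 4 * (1 - Real.cos l) ^ 2 * S2) := mul_le_mul_of_nonneg_right h5 hd0
      _ ≤ CΓ * ((π ^ 6 * (1 + Z + 8 * (1 + 1/(2*Hm))))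
            * |l| ^ (min 2 (3 - 2 * H)) / (k : ℝ) ^ (min 1 (2 * H))) := by
          apply mul_le_mul_of_nonneg_left _ hCΓ0.le
          rw [hZ]
          exact hdle
      _ = (CΓ * Cst) * |l| ^ (min 2 (3 - 2 * H)) / (k : ℝ) ^ (min 1 (2 * H)) := by
          rw [hCst]; ring
  refine ⟨⟨CΓ * Cst, mul_pos hCΓ0 hCst0, part1⟩, ?_⟩
  -- part 2
  intro ε hε
  set m₀ : ℝ := min 1 (2 * Hm) with hm₀
  have hm₀0 : 0 < m₀ := lt_min one_pos (by linarith)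
  set R : ℝ := CΓ * Cst * π ^ 2 / ε with hR
  have hR0 : 0 < R := by rw [hR]; positivity
  obtain ⟨N₀, hN₀⟩ := exists_nat_ge (R ^ (m₀⁻¹))
  refine ⟨max N₀ 2, ?_⟩
  intro k hk H hH l hl hl2
  have hk2 : 2 ≤ k := le_trans (le_max_right _ _) hk
  have hkN : N₀ ≤ k := le_trans (le_max_left _ _) hk
  have hkR : (1:ℝ) ≤ (k:ℝ) := by exact_mod_cast Nat.one_le_of_lt hk2
  have hk0 : (0:ℝ) < (k:ℝ) := by linarith
  have hb := part1 H hH k hk2 l hl hl2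
  have hemin0 : 0 ≤ min 2 (3 - 2 * H) := le_min (by norm_num) (by have := hH.2; linarith)
  have he : |l| ^ (min 2 (3 - 2 * H)) ≤ π ^ 2 := by
    calc |l| ^ (min 2 (3 - 2 * H)) ≤ π ^ (min 2 (3 - 2 * H)) :=
          Real.rpow_le_rpow (abs_nonneg l) hl2 hemin0
      _ ≤ π ^ (((2:ℕ)):ℝ) :=
          Real.rpow_le_rpow_of_exponent_le hπ1 (by push_cast; exact min_le_left _ _)
      _ = π ^ 2 := Real.rpow_natCast π 2
  have hkm : (k:ℝ) ^ m₀ ≤ (k:ℝ) ^ (min 1 (2 * H)) :=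
    Real.rpow_le_rpow_of_exponent_le hkR
      (min_le_min le_rfl (by have := hH.1; linarith))
  have hkm₀pos : (0:ℝ) < (k:ℝ) ^ m₀ := Real.rpow_pos_of_pos hk0 _
  have hkm₀ : R ≤ (k:ℝ) ^ m₀ := by
    calc R = (R ^ (m₀⁻¹)) ^ m₀ := (Real.rpow_inv_rpow hR0.le (ne_of_gt hm₀0)).symm
      _ ≤ (N₀:ℝ) ^ m₀ :=
          Real.rpow_le_rpow (Real.rpow_nonneg hR0.le _) hN₀ hm₀0.le
      _ ≤ (k:ℝ) ^ m₀ :=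
          Real.rpow_le_rpow (Nat.cast_nonneg _) (by exact_mod_cast hkN) hm₀0.le
  calc |fHk H k l - fHinf H l|
      ≤ (CΓ * Cst) * |l| ^ (min 2 (3 - 2 * H)) / (k : ℝ) ^ (min 1 (2 * H)) := hb
    _ ≤ (CΓ * Cst) * π ^ 2 / (k:ℝ) ^ m₀ := by
        apply div_le_div₀ (by positivity) _ hkm₀pos hkm
        exact mul_le_mul_of_nonneg_left he (by positivity)
    _ ≤ ε := by
        rw [div_le_iff₀ hkm₀pos]
        have h6 := mul_le_mul_of_nonneg_left hkm₀ hε.le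
        have h7 : ε * R = CΓ * Cst * π ^ 2 := by
          rw [hR]
          field_simp
        linarith
end

section
/- There exist constants c₁, c₂ > 0, independent of H ∈ [H_−, H_+] and k ∈ ℕ* ∪ {∞}, such that for all λ with 0 < |λ| ≤ π, c₁ |λ|^{1−2H} ≤ f_{H,k}(λ) ≤ c₂ |λ|^{1−2H}, where f_{H,k} is the spectral density of the pre-averaged fractional Brownian motion increment sequence. -/
open Real

lemma aux_abs_sin_lb {x c : ℝ} (h : ∀ n : ℤ, c ≤ |x - n * π|) :
    2 / π * c ≤ |Real.sin x| := by
  have hπ := Real.pi_pos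
  set n : ℤ := round (x / π) with hn
  have hy : |x - n * π| ≤ π / 2 := by
    have h2 : |x / π - n| ≤ 1 / 2 := abs_sub_round (x / π)
    have h3 : |x - n * π| = |x / π - n| * π := by
      have : x - n * π = (x / π - n) * π := by field_simp
      rw [this, abs_mul, abs_of_pos hπ]
    rw [h3]
    nlinarith [abs_nonneg (x / π - (n : ℝ))]
  have hsx : |Real.sin x| = |Real.sin (x - n * π)| := by
    have h4 := Real.sin_add_int_mul_pi (x - n * π) n
    rw [sub_add_cancel] at h4
    rw [h4, abs_mul]
    rcases Int.even_or_odd n with he | ho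
    · rw [he.neg_one_zpow]; simp
    · rw [ho.neg_one_zpow]; simp
  calc 2 / π * c ≤ 2 / π * |x - n * π| := by
        apply mul_le_mul_of_nonneg_left (h n) (by positivity)
    _ ≤ |Real.sin (x - n * π)| := Real.mul_abs_le_abs_sin hy
    _ = |Real.sin x| := hsx.symm

lemma aux_abs_le {l : ℝ} (hl : |l| ≤ π) (n : ℤ) : |l| ≤ |l + 2 * π * n| := by
  have hπ := Real.pi_pos
  rcases eq_or_ne n 0 with h | h
  · simp [h]
  · have h1 : (1 : ℝ) ≤ |(n : ℝ)| := by
      have := Int.one_le_abs h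
      exact_mod_cast this
    have h2 : |2 * π * (n : ℝ)| = 2 * π * |(n : ℝ)| := by
      rw [abs_mul, abs_of_pos (by positivity : (0:ℝ) < 2 * π)]
    have h3 : |2 * π * (n : ℝ)| ≤ |l + 2 * π * n| + |l| := by
      have h5 := abs_add_le (l + 2 * π * n) (-l)
      have h6 : l + 2 * π * (n : ℝ) + -l = 2 * π * n := by ring
      rw [h6, abs_neg] at h5
      exact h5
    nlinarith

lemma aux_k_sin_lb {l : ℝ} (hl0 : 0 < |l|) (hl : |l| ≤ π) {k : ℕ} (hk : 1 ≤ k) (j : ℤ) :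
    l ^ 2 / π ^ 2 ≤ (k : ℝ) ^ 2 * Real.sin (l / (2 * k) + π * j / k) ^ 2 := by
  have hπ := Real.pi_pos
  have hk0 : (0 : ℝ) < k := by exact_mod_cast Nat.pos_of_ne_zero (by omega)
  have key : ∀ n : ℤ, |l| / (2 * k) ≤ |(l / (2 * k) + π * j / k) - n * π| := by
    intro n
    have heq : (l / (2 * k) + π * j / k) - n * π
        = (l + 2 * π * ((j - k * n : ℤ) : ℝ)) / (2 * k) := by
      push_cast
      field_simp
      ring
    rw [heq, abs_div, abs_of_pos (by positivity : (0:ℝ) < 2 * k)]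
    exact div_le_div_of_nonneg_right (aux_abs_le hl (j - k * n)) (by positivity)
  have h2 := aux_abs_sin_lb key
  have habs : 2 / π * (|l| / (2 * k)) = |l| / (π * k) := by field_simp
  rw [habs] at h2
  have h4 : (|l| / (π * k)) ^ 2 ≤ Real.sin (l / (2 * k) + π * j / k) ^ 2 := by
    rw [← sq_abs (Real.sin _)]
    exact pow_le_pow_left₀ (by positivity) h2 2
  have h5 : l ^ 2 / π ^ 2 = (k : ℝ) ^ 2 * (|l| / (π * k)) ^ 2 := by
    rw [div_pow, ← sq_abs l]
    field_simp
  rw [h5]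
  exact mul_le_mul_of_nonneg_left h4 (by positivity)

lemma aux_k_sin_ub {l : ℝ} {k : ℕ} (hk : 1 ≤ k) :
    (k : ℝ) ^ 2 * Real.sin (l / (2 * k)) ^ 2 ≤ l ^ 2 / 4 := by
  have hk0 : (0 : ℝ) < k := by exact_mod_cast Nat.pos_of_ne_zero (by omega)
  have h1 : |Real.sin (l / (2 * k))| ≤ |l / (2 * k)| := Real.abs_sin_le_abs
  have h2 : Real.sin (l / (2 * k)) ^ 2 ≤ (l / (2 * k)) ^ 2 := by
    rw [← sq_abs (Real.sin _), ← sq_abs (l / (2 * k))]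
    exact pow_le_pow_left₀ (abs_nonneg _) h1 2
  have h3 : (k : ℝ) ^ 2 * (l / (2 * k)) ^ 2 = l ^ 2 / 4 := by
    field_simp
    ring
  calc (k : ℝ) ^ 2 * Real.sin (l / (2 * k)) ^ 2 ≤ (k : ℝ) ^ 2 * (l / (2 * k)) ^ 2 :=
        mul_le_mul_of_nonneg_left h2 (by positivity)
    _ = l ^ 2 / 4 := h3

lemma aux_one_sub_cos_lb {l : ℝ} (hl : |l| ≤ π) : 2 * l ^ 2 / π ^ 2 ≤ 1 - Real.cos l := by
  have hπ := Real.pi_pos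
  have key : ∀ n : ℤ, |l| / 2 ≤ |l / 2 - n * π| := by
    intro n
    have heq : l / 2 - n * π = (l + 2 * π * ((-n : ℤ) : ℝ)) / 2 := by push_cast; ring
    rw [heq, abs_div, abs_of_pos (by norm_num : (0:ℝ) < 2)]
    exact div_le_div_of_nonneg_right (aux_abs_le hl (-n)) (by norm_num)
  have h2 := aux_abs_sin_lb key
  have habs : 2 / π * (|l| / 2) = |l| / π := by field_simp
  rw [habs] at h2
  have h4 : (|l| / π) ^ 2 ≤ Real.sin (l / 2) ^ 2 := by
    rw [← sq_abs (Real.sin _)]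
    exact pow_le_pow_left₀ (by positivity) h2 2
  have h5 : Real.sin (l / 2) ^ 2 = 1 / 2 - Real.cos l / 2 := by
    have := Real.sin_sq_eq_half_sub (l / 2)
    rwa [mul_div_cancel₀ l (by norm_num : (2:ℝ) ≠ 0)] at this
  rw [h5] at h4
  rw [div_pow, sq_abs] at h4
  have h6 : 2 * l ^ 2 / π ^ 2 = 2 * (l ^ 2 / π ^ 2) := by ring
  rw [h6]
  linarith

lemma aux_one_sub_cos_ub (l : ℝ) : 1 - Real.cos l ≤ l ^ 2 / 2 := by
  have := Real.one_sub_sq_div_two_le_cos (x := l)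
  linarith

lemma tsum_u_bounds (sm s l : ℝ) (hsm : 1 < sm) (hs : sm ≤ s) (hl0 : 0 < |l|) (hl : |l| ≤ π) :
    Summable (fun j : ℤ => |l + 2 * π * j| ^ (-s)) ∧
    |l| ^ (-s) ≤ (∑' j : ℤ, |l + 2 * π * j| ^ (-s)) ∧
    (∑' j : ℤ, |l + 2 * π * j| ^ (-s)) ≤ |l| ^ (-s) + ∑' j : ℤ, |(j : ℝ)| ^ (-sm) := by
  have hπ := Real.pi_pos
  have hπ3 := Real.pi_gt_three
  set w : ℤ → ℝ := fun j => (if j = 0 then |l| ^ (-s) else 0) + |(j : ℝ)| ^ (-sm) with hw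
  have hsum1 : Summable (fun j : ℤ => if j = 0 then |l| ^ (-s) else 0) :=
    (hasSum_ite_eq (0 : ℤ) (|l| ^ (-s))).summable
  have hsum2 : Summable (fun j : ℤ => |(j : ℝ)| ^ (-sm)) := Real.summable_abs_int_rpow hsm
  have hwsum : Summable w := hsum1.add hsum2
  have hwt : ∑' j, w j = |l| ^ (-s) + ∑' j : ℤ, |(j : ℝ)| ^ (-sm) := by
    rw [hw, Summable.tsum_add hsum1 hsum2, tsum_ite_eq]
  have hle : ∀ j : ℤ, |l + 2 * π * j| ^ (-s) ≤ w j := by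
    intro j
    rcases eq_or_ne j 0 with hj | hj
    · subst hj
      simp only [hw, if_pos rfl]
      push_cast
      rw [mul_zero, add_zero, abs_zero, Real.zero_rpow (by linarith : -sm ≠ 0), add_zero]
    · have hj1 : (1 : ℝ) ≤ |(j : ℝ)| := by
        have := Int.one_le_abs hj
        exact_mod_cast this
      have hjle : |(j : ℝ)| ≤ |l + 2 * π * j| := by
        have h3 : |2 * π * (j : ℝ)| ≤ |l + 2 * π * j| + |l| := by
          have h5 := abs_add_le (l + 2 * π * j) (-l)
          have h6 : l + 2 * π * (j : ℝ) + -l = 2 * π * j := by ring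
          rw [h6, abs_neg] at h5
          exact h5
        have h2 : |2 * π * (j : ℝ)| = 2 * π * |(j : ℝ)| := by
          rw [abs_mul, abs_of_pos (by positivity : (0:ℝ) < 2 * π)]
        rw [h2] at h3
        nlinarith
      calc |l + 2 * π * j| ^ (-s) ≤ |(j : ℝ)| ^ (-s) :=
            Real.rpow_le_rpow_of_nonpos (by linarith) hjle (by linarith)
        _ ≤ |(j : ℝ)| ^ (-sm) :=
            Real.rpow_le_rpow_of_exponent_le hj1 (by linarith)
        _ ≤ w j := by
            simp only [hw, if_neg hj, zero_add, le_refl]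
  have hnn : ∀ j : ℤ, 0 ≤ |l + 2 * π * j| ^ (-s) := fun j => Real.rpow_nonneg (abs_nonneg _) _
  have hsummu : Summable (fun j : ℤ => |l + 2 * π * j| ^ (-s)) :=
    Summable.of_nonneg_of_le hnn hle hwsum
  refine ⟨hsummu, ?_, ?_⟩
  · have h0 : |l + 2 * π * ((0 : ℤ) : ℝ)| ^ (-s) = |l| ^ (-s) := by
      push_cast; rw [mul_zero, add_zero]
    have := Summable.le_tsum hsummu 0 (fun j _ => hnn j)
    rwa [h0] at this
  · rw [← hwt]
    exact Summable.tsum_le_tsum hle hsummu hwsum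

noncomputable def Gconst (H : ℝ) : ℝ := Real.Gamma (2 * H + 1) * Real.sin (π * H)

lemma Gconst_bounds (Hm Hp : ℝ) (h0 : 0 < Hm) (hmp : Hm ≤ Hp) (h1 : Hp < 1) :
    ∃ m M : ℝ, 0 < m ∧ 0 < M ∧ ∀ H ∈ Set.Icc Hm Hp, m ≤ Gconst H ∧ Gconst H ≤ M := by
  have hπ := Real.pi_pos
  have hcont : ContinuousOn Gconst (Set.Icc Hm Hp) := by
    intro x hx
    apply ContinuousAt.continuousWithinAt
    apply ContinuousAt.mul
    · have h1 : ∀ m : ℕ, 2 * x + 1 ≠ -(m : ℝ) := by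
        intro m heq
        have hx1 : 0 < 2 * x + 1 := by nlinarith [hx.1]
        have : (0:ℝ) ≤ m := Nat.cast_nonneg m
        linarith [heq ▸ hx1]
      have hg : ContinuousAt Real.Gamma (2 * x + 1) :=
        (Real.differentiableAt_Gamma h1).continuousAt
      have hf : ContinuousAt (fun y : ℝ => 2 * y + 1) x := by fun_prop
      exact ContinuousAt.comp (x := x) (g := Real.Gamma) (f := fun y : ℝ => 2 * y + 1) hg hf
    · fun_prop
  have hne : (Set.Icc Hm Hp).Nonempty := Set.nonempty_Icc.mpr hmp
  obtain ⟨a, ha, hmin⟩ := isCompact_Icc.exists_isMinOn hne hcont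
  obtain ⟨b, hb, hmax⟩ := isCompact_Icc.exists_isMaxOn hne hcont
  have hGpos : ∀ H ∈ Set.Icc Hm Hp, 0 < Gconst H := by
    intro H hH
    have hH0 : 0 < H := lt_of_lt_of_le h0 hH.1
    have hH1 : H < 1 := lt_of_le_of_lt hH.2 h1
    apply mul_pos (Real.Gamma_pos_of_pos (by linarith))
    apply Real.sin_pos_of_pos_of_lt_pi (by positivity)
    nlinarith
  exact ⟨Gconst a, Gconst b, hGpos a ha, hGpos b hb,
    fun H hH => ⟨hmin hH, hmax hH⟩⟩

/-- There are constants `c₁, c₂ > 0`, uniform in `H ∈ [H₋, H₊]` and `k ∈ ℕ* ∪ {∞}`,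
such that `c₁ |λ|^{1-2H} ≤ f_{H,k}(λ) ≤ c₂ |λ|^{1-2H}` for all `0 < |λ| ≤ π`. -/
theorem fHk_two_sided_bounds (Hm Hp : ℝ) (h0 : 0 < Hm) (hmp : Hm ≤ Hp) (h1 : Hp < 1) :
    ∃ c₁ c₂ : ℝ, 0 < c₁ ∧ 0 < c₂ ∧
      ∀ H ∈ Set.Icc Hm Hp, ∀ l : ℝ, 0 < |l| → |l| ≤ π →
        (∀ k : ℕ, 1 ≤ k →
          c₁ * |l| ^ (1 - 2 * H) ≤ fHk H k l ∧ fHk H k l ≤ c₂ * |l| ^ (1 - 2 * H)) ∧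
        (c₁ * |l| ^ (1 - 2 * H) ≤ fHinf H l ∧ fHinf H l ≤ c₂ * |l| ^ (1 - 2 * H)) := by
  have hπ := Real.pi_pos
  have hπ3 := Real.pi_gt_three
  obtain ⟨m, M, hm, hM, hmM⟩ := Gconst_bounds Hm Hp h0 hmp h1
  set C1 : ℝ := ∑' j : ℤ, |(j : ℝ)| ^ (-(1 + 2 * Hm)) with hC1def
  set C2 : ℝ := ∑' j : ℤ, |(j : ℝ)| ^ (-(3 + 2 * Hm)) with hC2def
  have hC1nn : 0 ≤ C1 := tsum_nonneg fun j => Real.rpow_nonneg (abs_nonneg _) _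
  have hC2nn : 0 ≤ C2 := tsum_nonneg fun j => Real.rpow_nonneg (abs_nonneg _) _
  set A1 : ℝ := π ^ 2 / 4 * (1 + C1 * π ^ 3) with hA1def
  set A2 : ℝ := 1 + C2 * π ^ 5 with hA2def
  have hA1 : 0 < A1 := by
    have : 0 ≤ C1 * π ^ 3 := mul_nonneg hC1nn (by positivity)
    rw [hA1def]; nlinarith
  have hA2 : 0 < A2 := by
    have : 0 ≤ C2 * π ^ 5 := mul_nonneg hC2nn (by positivity)
    rw [hA2def]; nlinarith
  refine ⟨m * (16 / π ^ 4), M * (A1 + A2), by positivity, by positivity, ?_⟩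
  intro H hH l hl0 hl
  have hH0 : 0 < H := lt_of_lt_of_le h0 hH.1
  have hH1 : H < 1 := lt_of_le_of_lt hH.2 h1
  obtain ⟨hGm, hGM⟩ := hmM H hH
  have hGH : 0 < Gconst H :=
    mul_pos (Real.Gamma_pos_of_pos (by linarith))
      (Real.sin_pos_of_pos_of_lt_pi (by positivity) (by nlinarith))
  have hlne : l ≠ 0 := abs_pos.mp hl0
  have epow : 0 < |l| ^ (1 - 2 * H) := Real.rpow_pos_of_pos hl0 _
  have e1 : |l| ^ 2 * |l| ^ (-(1 + 2 * H)) = |l| ^ (1 - 2 * H) := by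
    rw [← Real.rpow_natCast |l| 2, ← Real.rpow_add hl0]
    congr 1; push_cast; ring
  have e2 : |l| ^ 4 * |l| ^ (-(3 + 2 * H)) = |l| ^ (1 - 2 * H) := by
    rw [← Real.rpow_natCast |l| 4, ← Real.rpow_add hl0]
    congr 1; push_cast; ring
  have e3 : |l| ^ 2 ≤ π ^ 3 * |l| ^ (1 - 2 * H) := by
    have hsplit : |l| ^ 2 = |l| ^ (1 + 2 * H) * |l| ^ (1 - 2 * H) := by
      rw [← Real.rpow_add hl0, ← Real.rpow_natCast |l| 2]
      congr 1; push_cast; ring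
    rw [hsplit]
    apply mul_le_mul_of_nonneg_right _ epow.le
    calc |l| ^ (1 + 2 * H) ≤ π ^ (1 + 2 * H) :=
          Real.rpow_le_rpow (abs_nonneg l) hl (by linarith)
      _ ≤ π ^ ((3 : ℕ) : ℝ) :=
          Real.rpow_le_rpow_of_exponent_le (by linarith) (by push_cast; linarith)
      _ = π ^ 3 := Real.rpow_natCast π 3
  have e4 : |l| ^ 4 ≤ π ^ 5 * |l| ^ (1 - 2 * H) := by
    have hsplit : |l| ^ 4 = |l| ^ (3 + 2 * H) * |l| ^ (1 - 2 * H) := by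
      rw [← Real.rpow_add hl0, ← Real.rpow_natCast |l| 4]
      congr 1; push_cast; ring
    rw [hsplit]
    apply mul_le_mul_of_nonneg_right _ epow.le
    calc |l| ^ (3 + 2 * H) ≤ π ^ (3 + 2 * H) :=
          Real.rpow_le_rpow (abs_nonneg l) hl (by linarith)
      _ ≤ π ^ ((5 : ℕ) : ℝ) :=
          Real.rpow_le_rpow_of_exponent_le (by linarith) (by push_cast; linarith)
      _ = π ^ 5 := Real.rpow_natCast π 5
  have h1cos0 : 0 ≤ 1 - Real.cos l := by linarith [Real.cos_le_one l]
  have h1cosU : 1 - Real.cos l ≤ l ^ 2 / 2 := aux_one_sub_cos_ub l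
  have h1cosL : 2 * l ^ 2 / π ^ 2 ≤ 1 - Real.cos l := aux_one_sub_cos_lb hl
  have hl2 : l ^ 2 = |l| ^ 2 := (sq_abs l).symm
  have hl4 : l ^ 4 = |l| ^ 4 := by rw [← abs_pow]; exact (abs_of_nonneg (by positivity)).symm
  obtain ⟨hsum1, hlow1, hup1⟩ :=
    tsum_u_bounds (1 + 2 * Hm) (1 + 2 * H) l (by linarith) (by linarith [hH.1]) hl0 hl
  obtain ⟨hsum2, hlow2, hup2⟩ :=
    tsum_u_bounds (3 + 2 * Hm) (3 + 2 * H) l (by linarith) (by linarith [hH.1]) hl0 hl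
  constructor
  · -- finite k case
    intro k hk
    have hk0 : (0 : ℝ) < k := by exact_mod_cast Nat.pos_of_ne_zero (by omega)
    set t : ℤ → ℝ := fun j => (1 - Real.cos l) ^ 2 /
      ((k : ℝ) ^ 2 * Real.sin (l / (2 * k) + π * j / k) ^ 2) * |l + 2 * π * j| ^ (-(1 + 2 * H))
      with htdef
    have hfHk : fHk H k l = Gconst H * ∑' j, t j := rfl
    have hden : ∀ j : ℤ, l ^ 2 / π ^ 2 ≤ (k : ℝ) ^ 2 * Real.sin (l / (2 * k) + π * j / k) ^ 2 :=
      aux_k_sin_lb hl0 hl hk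
    have hdenpos : ∀ j : ℤ, 0 < (k : ℝ) ^ 2 * Real.sin (l / (2 * k) + π * j / k) ^ 2 :=
      fun j => lt_of_lt_of_le (by positivity) (hden j)
    have htnn : ∀ j : ℤ, 0 ≤ t j := fun j =>
      mul_nonneg (div_nonneg (by positivity) (hdenpos j).le) (Real.rpow_nonneg (abs_nonneg _) _)
    have hcoef : ∀ j : ℤ, (1 - Real.cos l) ^ 2 /
        ((k : ℝ) ^ 2 * Real.sin (l / (2 * k) + π * j / k) ^ 2) ≤ π ^ 2 * l ^ 2 / 4 := by
      intro j
      have hnum : (1 - Real.cos l) ^ 2 ≤ l ^ 4 / 4 := by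
        calc (1 - Real.cos l) ^ 2 ≤ (l ^ 2 / 2) ^ 2 := pow_le_pow_left₀ h1cos0 h1cosU 2
          _ = l ^ 4 / 4 := by ring
      calc (1 - Real.cos l) ^ 2 / ((k : ℝ) ^ 2 * Real.sin (l / (2 * k) + π * j / k) ^ 2)
          ≤ (l ^ 4 / 4) / (l ^ 2 / π ^ 2) :=
            div_le_div₀ (by positivity) hnum (by positivity) (hden j)
        _ = π ^ 2 * l ^ 2 / 4 := by field_simp
    have ht_le : ∀ j : ℤ, t j ≤ π ^ 2 * l ^ 2 / 4 * |l + 2 * π * j| ^ (-(1 + 2 * H)) :=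
      fun j => mul_le_mul_of_nonneg_right (hcoef j) (Real.rpow_nonneg (abs_nonneg _) _)
    have hsummt : Summable t := Summable.of_nonneg_of_le htnn ht_le (hsum1.mul_left _)
    constructor
    · -- lower bound
      have ht0eq : t 0 = (1 - Real.cos l) ^ 2 / ((k : ℝ) ^ 2 * Real.sin (l / (2 * k)) ^ 2)
          * |l| ^ (-(1 + 2 * H)) := by
        simp [htdef]
      have ht0 : 16 / π ^ 4 * |l| ^ (1 - 2 * H) ≤ t 0 := by
        rw [ht0eq]
        have hnum : (2 * l ^ 2 / π ^ 2) ^ 2 ≤ (1 - Real.cos l) ^ 2 :=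
          pow_le_pow_left₀ (by positivity) h1cosL 2
        have hdub := aux_k_sin_ub (l := l) hk
        have hdp : 0 < (k : ℝ) ^ 2 * Real.sin (l / (2 * k)) ^ 2 := by
          have := hdenpos 0
          simpa using this
        have hq : 16 / π ^ 4 * l ^ 2 ≤
            (1 - Real.cos l) ^ 2 / ((k : ℝ) ^ 2 * Real.sin (l / (2 * k)) ^ 2) := by
          calc 16 / π ^ 4 * l ^ 2 = (2 * l ^ 2 / π ^ 2) ^ 2 / (l ^ 2 / 4) := by
                field_simp; ring
            _ ≤ (1 - Real.cos l) ^ 2 / ((k : ℝ) ^ 2 * Real.sin (l / (2 * k)) ^ 2) :=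
                div_le_div₀ (by positivity) hnum hdp hdub
        calc 16 / π ^ 4 * |l| ^ (1 - 2 * H)
            = 16 / π ^ 4 * l ^ 2 * |l| ^ (-(1 + 2 * H)) := by
              rw [hl2, mul_assoc, e1]
          _ ≤ (1 - Real.cos l) ^ 2 / ((k : ℝ) ^ 2 * Real.sin (l / (2 * k)) ^ 2)
              * |l| ^ (-(1 + 2 * H)) :=
              mul_le_mul_of_nonneg_right hq (Real.rpow_nonneg (abs_nonneg _) _)
      have htsum0 : t 0 ≤ ∑' j, t j := Summable.le_tsum hsummt 0 fun j _ => htnn j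
      calc m * (16 / π ^ 4) * |l| ^ (1 - 2 * H)
          = m * (16 / π ^ 4 * |l| ^ (1 - 2 * H)) := by ring
        _ ≤ Gconst H * ∑' j, t j :=
            mul_le_mul hGm (ht0.trans htsum0) (by positivity) hGH.le
        _ = fHk H k l := hfHk.symm
    · -- upper bound
      have hup : ∑' j, t j ≤ π ^ 2 * l ^ 2 / 4 * (|l| ^ (-(1 + 2 * H)) + C1) := by
        calc ∑' j, t j ≤ ∑' j : ℤ, π ^ 2 * l ^ 2 / 4 * |l + 2 * π * j| ^ (-(1 + 2 * H)) :=
              Summable.tsum_le_tsum ht_le hsummt (hsum1.mul_left _)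
          _ = π ^ 2 * l ^ 2 / 4 * ∑' j : ℤ, |l + 2 * π * j| ^ (-(1 + 2 * H)) := tsum_mul_left
          _ ≤ π ^ 2 * l ^ 2 / 4 * (|l| ^ (-(1 + 2 * H)) + C1) :=
              mul_le_mul_of_nonneg_left hup1 (by positivity)
      have hfin : π ^ 2 * l ^ 2 / 4 * (|l| ^ (-(1 + 2 * H)) + C1) ≤ A1 * |l| ^ (1 - 2 * H) := by
        have hstep : π ^ 2 / 4 * C1 * |l| ^ 2 ≤ π ^ 2 / 4 * C1 * (π ^ 3 * |l| ^ (1 - 2 * H)) :=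
          mul_le_mul_of_nonneg_left e3 (mul_nonneg (by positivity) hC1nn)
        calc π ^ 2 * l ^ 2 / 4 * (|l| ^ (-(1 + 2 * H)) + C1)
            = π ^ 2 / 4 * (|l| ^ 2 * |l| ^ (-(1 + 2 * H))) + π ^ 2 / 4 * C1 * |l| ^ 2 := by
              rw [hl2]; ring
          _ = π ^ 2 / 4 * |l| ^ (1 - 2 * H) + π ^ 2 / 4 * C1 * |l| ^ 2 := by rw [e1]
          _ ≤ π ^ 2 / 4 * |l| ^ (1 - 2 * H) + π ^ 2 / 4 * C1 * (π ^ 3 * |l| ^ (1 - 2 * H)) := by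
              linarith
          _ = A1 * |l| ^ (1 - 2 * H) := by rw [hA1def]; ring
      calc fHk H k l = Gconst H * ∑' j, t j := hfHk
        _ ≤ M * (A1 * |l| ^ (1 - 2 * H)) :=
            mul_le_mul hGM (hup.trans hfin) (tsum_nonneg htnn) hM.le
        _ ≤ M * (A1 + A2) * |l| ^ (1 - 2 * H) := by
            have h7 : M * A1 ≤ M * (A1 + A2) :=
              mul_le_mul_of_nonneg_left (by linarith) hM.le
            calc M * (A1 * |l| ^ (1 - 2 * H)) = M * A1 * |l| ^ (1 - 2 * H) := by ring
              _ ≤ M * (A1 + A2) * |l| ^ (1 - 2 * H) :=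
                  mul_le_mul_of_nonneg_right h7 epow.le
  · -- infinite case
    have hfinf : fHinf H l = 4 * Gconst H * ((1 - Real.cos l) ^ 2 *
        ∑' j : ℤ, |l + 2 * π * j| ^ (-(3 + 2 * H))) := by
      unfold fHinf Gconst; ring
    have hSnn : 0 ≤ ∑' j : ℤ, |l + 2 * π * j| ^ (-(3 + 2 * H)) :=
      tsum_nonneg fun j => Real.rpow_nonneg (abs_nonneg _) _
    constructor
    · -- lower
      have hnum : (2 * l ^ 2 / π ^ 2) ^ 2 ≤ (1 - Real.cos l) ^ 2 :=
        pow_le_pow_left₀ (by positivity) h1cosL 2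
      have key : 4 / π ^ 4 * |l| ^ (1 - 2 * H) ≤ (1 - Real.cos l) ^ 2 *
          ∑' j : ℤ, |l + 2 * π * j| ^ (-(3 + 2 * H)) := by
        calc 4 / π ^ 4 * |l| ^ (1 - 2 * H)
            = (2 * l ^ 2 / π ^ 2) ^ 2 * |l| ^ (-(3 + 2 * H)) := by
              rw [← e2, ← hl4]; field_simp; ring
          _ ≤ (1 - Real.cos l) ^ 2 * |l| ^ (-(3 + 2 * H)) :=
              mul_le_mul_of_nonneg_right hnum (Real.rpow_nonneg (abs_nonneg _) _)
          _ ≤ (1 - Real.cos l) ^ 2 * ∑' j : ℤ, |l + 2 * π * j| ^ (-(3 + 2 * H)) :=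
              mul_le_mul_of_nonneg_left hlow2 (sq_nonneg _)
      have key2 : m * (4 / π ^ 4 * |l| ^ (1 - 2 * H)) ≤ Gconst H *
          ((1 - Real.cos l) ^ 2 * ∑' j : ℤ, |l + 2 * π * j| ^ (-(3 + 2 * H))) :=
        mul_le_mul hGm key (by positivity) hGH.le
      calc m * (16 / π ^ 4) * |l| ^ (1 - 2 * H)
          = 4 * (m * (4 / π ^ 4 * |l| ^ (1 - 2 * H))) := by ring
        _ ≤ 4 * (Gconst H * ((1 - Real.cos l) ^ 2 *
              ∑' j : ℤ, |l + 2 * π * j| ^ (-(3 + 2 * H)))) := by linarith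
        _ = fHinf H l := by rw [hfinf]; ring
    · -- upper
      have key : (1 - Real.cos l) ^ 2 * ∑' j : ℤ, |l + 2 * π * j| ^ (-(3 + 2 * H))
          ≤ l ^ 4 / 4 * (|l| ^ (-(3 + 2 * H)) + C2) := by
        have hnum : (1 - Real.cos l) ^ 2 ≤ l ^ 4 / 4 := by
          calc (1 - Real.cos l) ^ 2 ≤ (l ^ 2 / 2) ^ 2 := pow_le_pow_left₀ h1cos0 h1cosU 2
            _ = l ^ 4 / 4 := by ring
        apply mul_le_mul hnum hup2 hSnn (by positivity)
      have hfin : l ^ 4 / 4 * (|l| ^ (-(3 + 2 * H)) + C2) ≤ (A2 / 4) * |l| ^ (1 - 2 * H) := by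
        have hstep : C2 / 4 * |l| ^ 4 ≤ C2 / 4 * (π ^ 5 * |l| ^ (1 - 2 * H)) :=
          mul_le_mul_of_nonneg_left e4 (div_nonneg hC2nn (by norm_num))
        calc l ^ 4 / 4 * (|l| ^ (-(3 + 2 * H)) + C2)
            = 1 / 4 * (|l| ^ 4 * |l| ^ (-(3 + 2 * H))) + C2 / 4 * |l| ^ 4 := by
              rw [hl4]; ring
          _ = 1 / 4 * |l| ^ (1 - 2 * H) + C2 / 4 * |l| ^ 4 := by rw [e2]
          _ ≤ 1 / 4 * |l| ^ (1 - 2 * H) + C2 / 4 * (π ^ 5 * |l| ^ (1 - 2 * H)) := by linarith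
          _ = (A2 / 4) * |l| ^ (1 - 2 * H) := by rw [hA2def]; ring
      calc fHinf H l = 4 * Gconst H * ((1 - Real.cos l) ^ 2 *
            ∑' j : ℤ, |l + 2 * π * j| ^ (-(3 + 2 * H))) := hfinf
        _ ≤ 4 * M * ((A2 / 4) * |l| ^ (1 - 2 * H)) := by
            apply mul_le_mul (by linarith) (key.trans hfin)
              (mul_nonneg (sq_nonneg _) hSnn) (by linarith)
        _ = M * A2 * |l| ^ (1 - 2 * H) := by ring
        _ ≤ M * (A1 + A2) * |l| ^ (1 - 2 * H) := by
            have h7 : M * A2 ≤ M * (A1 + A2) :=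
              mul_le_mul_of_nonneg_left (by linarith) hM.le
            exact mul_le_mul_of_nonneg_right h7 epow.le
end
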